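/- For any sequence (δ_k)_{k≥1} of positive reals, the set Γ_{(δ_k)} of all τ ∈ TS^c(C*_R⟨x(·)⟩) such that for every k ≥ 1, sup over 0 ≤ s,t ≤ k with |s−t| ≤ δ_k and all indices (i,j) of τ((x_{ij}(s) − x_{ij}(t))²)^{1/2} is at most 1/k, is a compact subset of the complete metric space (TS^c(C*_R⟨x(·)⟩), d). -/

import Mathlib

open scoped NNReal

/-- The letters x_{ij}, 1 ≤ i ≤ n+1, 1 ≤ j ≤ r(i). -/
abbrev Letter (n : ℕ) (r : Fin (n + 1) → ℕ) := Σ i : Fin (n + 1), Fin (r i)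

/-- A tracial state on the universal C*-algebra C*_R⟨x(·)⟩ (generated by
self-adjoint elements x_{ij}(t), t ≥ 0, of norm ≤ R) whose GNS processes are
strong-operator continuous, encoded by its moment functional on words.
A word is a list of pairs (letter, time). The fields encode: normalization,
traciality, the *-structure (letters are self-adjoint, so star reverses words),
positivity, the operator norm bound ‖x_{ij}(t)‖ ≤ R (both as the moment growth
bound and as positivity of R² − x_{ij}(t)² in the GNS representation), and
— via Lemma 2.1 — strong-operator continuity of the processes, i.e. joint
continuity of all moments in the time variables. -/
structure TracialStateC (n : ℕ) (r : Fin (n + 1) → ℕ) (R : ℝ) where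
  tr : List (Letter n r × ℝ≥0) → ℂ
  normalized : tr [] = 1
  tracial : ∀ w v : List (Letter n r × ℝ≥0), tr (w ++ v) = tr (v ++ w)
  star_word : ∀ w : List (Letter n r × ℝ≥0), tr w.reverse = starRingEnd ℂ (tr w)
  positive : ∀ (k : ℕ) (ws : Fin k → List (Letter n r × ℝ≥0)) (c : Fin k → ℂ),
    0 ≤ (∑ a, ∑ b, starRingEnd ℂ (c a) * c b * tr ((ws a).reverse ++ ws b)).re
  norm_bound : ∀ w : List (Letter n r × ℝ≥0), ‖tr w‖ ≤ R ^ w.length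
  generator_bound : ∀ (k : ℕ) (ws : Fin k → List (Letter n r × ℝ≥0))
      (c : Fin k → ℂ) (x : Letter n r) (t : ℝ≥0),
    (∑ a, ∑ b, starRingEnd ℂ (c a) * c b *
        tr ((ws a).reverse ++ [(x, t), (x, t)] ++ ws b)).re ≤
      R ^ 2 * (∑ a, ∑ b, starRingEnd ℂ (c a) * c b *
        tr ((ws a).reverse ++ ws b)).re
  moment_continuous : ∀ (ℓ : ℕ) (ls : Fin ℓ → Letter n r),
    Continuous fun ts : Fin ℓ → ℝ≥0 => tr (List.ofFn fun k => (ls k, ts k))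

/-- The metric d(τ₁,τ₂) = Σ_{m,ℓ ≥ 1} 2^{−m}(2R)^{−ℓ} · max_{w ∈ W_ℓ}
sup_{(t₁,…,t_ℓ) ∈ [0,m]^ℓ} |τ₁(w(t₁,…,t_ℓ)) − τ₂(w(t₁,…,t_ℓ))|. -/
noncomputable def trDist {n : ℕ} {r : Fin (n + 1) → ℕ} {R : ℝ}
    (τ₁ τ₂ : TracialStateC n r R) : ℝ :=
  ∑' q : ℕ × ℕ,
    (1 / 2 ^ (q.1 + 1)) * (1 / (2 * R) ^ (q.2 + 1)) *
      ⨆ ls : Fin (q.2 + 1) → Letter n r,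
        ⨆ ts : Fin (q.2 + 1) → (Set.Icc (0 : ℝ≥0) ((q.1 : ℝ≥0) + 1)),
          ‖(τ₁.tr (List.ofFn fun k => (ls k, (ts k : ℝ≥0))) -
              τ₂.tr (List.ofFn fun k => (ls k, (ts k : ℝ≥0))))‖

/-- τ((x_{ij}(s) − x_{ij}(t))²), expanded into four moments (a real number). -/
noncomputable def sqIncrement {n : ℕ} {r : Fin (n + 1) → ℕ} {R : ℝ}
    (τ : TracialStateC n r R) (p : Letter n r) (s t : ℝ≥0) : ℝ :=
  (τ.tr [(p, s), (p, s)] - τ.tr [(p, s), (p, t)] -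
    τ.tr [(p, t), (p, s)] + τ.tr [(p, t), (p, t)]).re

/-- The set Γ_{(δ_k)} of Lemma 2.2(2): uniform modulus-of-continuity constraints
(indexed by k ≥ 1, encoded by k+1 over k : ℕ). -/
def GammaSet {n : ℕ} {r : Fin (n + 1) → ℕ} {R : ℝ} (δk : ℕ → ℝ) :
    Set (TracialStateC n r R) :=
  {τ | ∀ (k : ℕ) (s t : ℝ≥0), (s : ℝ) ≤ k + 1 → (t : ℝ) ≤ k + 1 →
    |(s : ℝ) - (t : ℝ)| ≤ δk k → ∀ p : Letter n r,
      Real.sqrt (sqIncrement τ p s t) ≤ 1 / (k + 1)}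


namespace GammaAux

variable {n : ℕ} {r : Fin (n + 1) → ℕ} {R : ℝ}

lemma herm (τ : TracialStateC n r R) (w v : List (Letter n r × ℝ≥0)) :
    τ.tr (v.reverse ++ w) = starRingEnd ℂ (τ.tr (w.reverse ++ v)) := by
  rw [← τ.star_word, List.reverse_append, List.reverse_reverse]

lemma sqIncrement_nonneg (τ : TracialStateC n r R) (p : Letter n r) (s t : ℝ≥0) :
    0 ≤ sqIncrement τ p s t := by
  have h := τ.positive 2 ![[(p, s)], [(p, t)]] ![1, -1]
  simp only [Fin.sum_univ_two, Matrix.cons_val_zero, Matrix.cons_val_one, Matrix.head_cons,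
    map_one, map_neg, one_mul, mul_one, neg_mul, mul_neg, neg_neg, List.reverse_singleton,
    List.singleton_append] at h
  simp only [Complex.add_re, Complex.neg_re] at h
  simp only [sqIncrement, Complex.add_re, Complex.sub_re]
  linarith


lemma key_cs (hR : 0 ≤ R) (τ : TracialStateC n r R)
    (C : List (Letter n r × ℝ≥0)) (p : Letter n r) (s t : ℝ≥0) :
    ‖τ.tr (C ++ [(p, s)]) - τ.tr (C ++ [(p, t)])‖ ≤
      R ^ C.length * Real.sqrt (sqIncrement τ p s t) := by
  set B : ℂ := τ.tr (C ++ [(p, s)]) - τ.tr (C ++ [(p, t)]) with hB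
  set A : ℝ := (τ.tr (C ++ C.reverse)).re with hA
  set Q : ℝ := sqIncrement τ p s t with hQdef
  have hQ0 : 0 ≤ Q := sqIncrement_nonneg τ p s t
  -- hermitian identities
  have h10 : τ.tr ([(p, s)] ++ C.reverse) = starRingEnd ℂ (τ.tr (C ++ [(p, s)])) := by
    simpa using herm τ C.reverse [(p, s)]
  have h20 : τ.tr ([(p, t)] ++ C.reverse) = starRingEnd ℂ (τ.tr (C ++ [(p, t)])) := by
    simpa using herm τ C.reverse [(p, t)]
  have h21 : τ.tr ([(p, t)] ++ [(p, s)]) = starRingEnd ℂ (τ.tr ([(p, s)] ++ [(p, t)])) := by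
    simpa using herm τ [(p, s)] [(p, t)]
  have h11 : ((τ.tr ([(p, s)] ++ [(p, s)])).re : ℂ) = τ.tr ([(p, s)] ++ [(p, s)]) :=
    Complex.conj_eq_iff_re.mp (Eq.symm (by simpa using herm τ [(p, s)] [(p, s)]))
  have h22 : ((τ.tr ([(p, t)] ++ [(p, t)])).re : ℂ) = τ.tr ([(p, t)] ++ [(p, t)]) :=
    Complex.conj_eq_iff_re.mp (Eq.symm (by simpa using herm τ [(p, t)] [(p, t)]))
  have h00 : ((A : ℝ) : ℂ) = τ.tr (C ++ C.reverse) :=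
    Complex.conj_eq_iff_re.mp (Eq.symm (by simpa using herm τ C.reverse C.reverse))
  have hQre : Q = (τ.tr ([(p, s)] ++ [(p, s)])).re - 2 * (τ.tr ([(p, s)] ++ [(p, t)])).re
      + (τ.tr ([(p, t)] ++ [(p, t)])).re := by
    have := congrArg Complex.re h21
    simp only [Complex.conj_re] at this
    simp only [hQdef, sqIncrement, Complex.add_re, Complex.sub_re, List.singleton_append] at *
    linarith
  have hquad : ∀ l : ℂ, 0 ≤ A + 2 * (l * B).re + Complex.normSq l * Q := by
    intro l
    have h := τ.positive 3 ![C.reverse, [(p, s)], [(p, t)]] ![1, l, -l]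
    simp only [Fin.sum_univ_three, Matrix.cons_val_zero, Matrix.cons_val_one, Matrix.head_cons,
      Matrix.cons_val_two, Matrix.tail_cons, List.reverse_reverse, List.reverse_singleton,
      map_one, map_neg, one_mul, mul_one, neg_mul, mul_neg, neg_neg] at h
    rw [h10, h20, h21, ← h11, ← h22, ← h00] at h
    have hEq : (((A : ℝ) : ℂ) + l * τ.tr (C ++ [(p, s)]) + -(l * τ.tr (C ++ [(p, t)])) +
          ((starRingEnd ℂ) l * (starRingEnd ℂ) (τ.tr (C ++ [(p, s)])) +
              (starRingEnd ℂ) l * l * ((τ.tr ([(p, s)] ++ [(p, s)])).re : ℂ) +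
            -((starRingEnd ℂ) l * l * τ.tr ([(p, s)] ++ [(p, t)]))) +
        (-((starRingEnd ℂ) l * (starRingEnd ℂ) (τ.tr (C ++ [(p, t)]))) +
            -((starRingEnd ℂ) l * l * (starRingEnd ℂ) (τ.tr ([(p, s)] ++ [(p, t)])))+
          (starRingEnd ℂ) l * l * ((τ.tr ([(p, t)] ++ [(p, t)])).re : ℂ))).re
        = A + 2 * (l * B).re + Complex.normSq l * Q := by
      simp only [hB, hQre, Complex.add_re, Complex.sub_re, Complex.neg_re, Complex.mul_re,
        Complex.mul_im, Complex.add_im, Complex.sub_im, Complex.neg_im, Complex.conj_re,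
        Complex.conj_im, Complex.ofReal_re, Complex.ofReal_im, Complex.normSq_apply]
      ring
    rw [hEq] at h
    exact h
  have hA0 : 0 ≤ A := by simpa using hquad 0
  have habs : ‖B‖ ^ 2 ≤ A * Q := by
    rcases eq_or_ne B 0 with hb | hb
    · simp [hb]; positivity
    · have hBpos : 0 < ‖B‖ := by
        simpa using (norm_pos_iff.mpr hb)
      have key : ∀ x : ℝ, 0 ≤ Q * (x * x) + (-(2 * ‖B‖)) * x + A := by
        intro x
        have h := hquad (-(x / ‖B‖) * (starRingEnd ℂ) B)
        have h1 : ((((-(x / ‖B‖) : ℝ) : ℂ) * (starRingEnd ℂ) B) * B).re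
            = -(x * ‖B‖) := by
          rw [mul_assoc, mul_comm ((starRingEnd ℂ) B) B, Complex.mul_conj]
          simp only [Complex.mul_re, Complex.ofReal_re, Complex.ofReal_im, Complex.neg_re,
            Complex.neg_im, Complex.normSq_eq_norm_sq]
          field_simp
          ring
        have h2 : Complex.normSq ((-(x / ‖B‖) : ℝ) * (starRingEnd ℂ) B) = x * x := by
          rw [map_mul, Complex.normSq_ofReal, Complex.normSq_conj, Complex.normSq_eq_norm_sq]
          field_simp
        have hcast : (-(↑x / ((‖B‖ : ℝ) : ℂ)) : ℂ) = ((-(x / ‖B‖) : ℝ) : ℂ) := by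
          push_cast; ring
        rw [hcast, h2, h1] at h
        linarith
      have := discrim_le_zero key
      rw [discrim] at this
      nlinarith [this]
  have h1 : ‖B‖ ≤ Real.sqrt A * Real.sqrt Q := by
    rw [← Real.sqrt_mul_self (norm_nonneg B), ← Real.sqrt_mul hA0]
    exact Real.sqrt_le_sqrt (by nlinarith [habs])
  have h2 : Real.sqrt A ≤ R ^ C.length := by
    have hle : A ≤ (R ^ C.length) ^ 2 := by
      have := τ.norm_bound (C ++ C.reverse)
      have hre : A ≤ ‖τ.tr (C ++ C.reverse)‖ := Complex.re_le_norm _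
      have : ‖τ.tr (C ++ C.reverse)‖ ≤ R ^ (C ++ C.reverse).length :=
        τ.norm_bound _
      rw [List.length_append, List.length_reverse] at this
      calc A ≤ ‖τ.tr (C ++ C.reverse)‖ := hre
        _ ≤ R ^ (C.length + C.length) := this
        _ = (R ^ C.length) ^ 2 := by rw [← pow_mul]; ring_nf
    calc Real.sqrt A ≤ Real.sqrt ((R ^ C.length) ^ 2) := Real.sqrt_le_sqrt hle
      _ = R ^ C.length := Real.sqrt_sq (by positivity)
  calc ‖B‖ ≤ Real.sqrt A * Real.sqrt Q := h1
    _ ≤ R ^ C.length * Real.sqrt Q := by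
        exact mul_le_mul_of_nonneg_right h2 (Real.sqrt_nonneg _)

lemma tele (hR : 0 ≤ R) (τ : TracialStateC n r R) :
    ∀ (L : List (Letter n r × ℝ≥0 × ℝ≥0)) (P : List (Letter n r × ℝ≥0)),
    ‖τ.tr (P ++ L.map fun q => (q.1, q.2.1)) -
        τ.tr (P ++ L.map fun q => (q.1, q.2.2))‖
      ≤ (L.map fun q => R ^ (P.length + L.length - 1) *
          Real.sqrt (sqIncrement τ q.1 q.2.1 q.2.2)).sum := by
  intro L
  induction L with
  | nil => intro P; simp
  | cons q L' ih =>
    intro P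
    simp only [List.map_cons, List.length_cons, List.sum_cons]
    have he : P.length + (L'.length + 1) - 1 = P.length + L'.length := by omega
    rw [he]
    have step1 := ih (P ++ [(q.1, q.2.1)])
    rw [show (P ++ [(q.1, q.2.1)]).length + L'.length - 1 = P.length + L'.length by
      simp] at step1
    rw [show ((P ++ [(q.1, q.2.1)]) ++ L'.map fun q => (q.1, q.2.1))
        = P ++ (q.1, q.2.1) :: L'.map fun q => (q.1, q.2.1) by simp] at step1
    rw [show ((P ++ [(q.1, q.2.1)]) ++ L'.map fun q => (q.1, q.2.2))
        = P ++ (q.1, q.2.1) :: L'.map fun q => (q.1, q.2.2) by simp] at step1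
    have hr : ∀ (x : ℝ≥0), τ.tr (P ++ (q.1, x) :: L'.map fun q => (q.1, q.2.2))
        = τ.tr (((L'.map fun q => (q.1, q.2.2)) ++ P) ++ [(q.1, x)]) := by
      intro x
      rw [show (P ++ (q.1, x) :: L'.map fun q => (q.1, q.2.2))
          = (P ++ [(q.1, x)]) ++ L'.map fun q => (q.1, q.2.2) by simp,
        τ.tracial, ← List.append_assoc]
    have step2 : ‖τ.tr (P ++ (q.1, q.2.1) :: L'.map fun q => (q.1, q.2.2)) -
        τ.tr (P ++ (q.1, q.2.2) :: L'.map fun q => (q.1, q.2.2))‖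
        ≤ R ^ (P.length + L'.length) * Real.sqrt (sqIncrement τ q.1 q.2.1 q.2.2) := by
      rw [hr, hr]
      have := key_cs hR τ ((L'.map fun q => (q.1, q.2.2)) ++ P) q.1 q.2.1 q.2.2
      rw [List.length_append, List.length_map] at this
      rw [show L'.length + P.length = P.length + L'.length by omega] at this
      exact this
    calc ‖τ.tr (P ++ (q.1, q.2.1) :: L'.map fun q => (q.1, q.2.1)) -
          τ.tr (P ++ (q.1, q.2.2) :: L'.map fun q => (q.1, q.2.2))‖
        ≤ ‖τ.tr (P ++ (q.1, q.2.1) :: L'.map fun q => (q.1, q.2.1)) -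
            τ.tr (P ++ (q.1, q.2.1) :: L'.map fun q => (q.1, q.2.2))‖
          + ‖τ.tr (P ++ (q.1, q.2.1) :: L'.map fun q => (q.1, q.2.2)) -
            τ.tr (P ++ (q.1, q.2.2) :: L'.map fun q => (q.1, q.2.2))‖ :=
          norm_sub_le_norm_sub_add_norm_sub _ _ _
      _ ≤ (L'.map fun q => R ^ (P.length + L'.length) *
              Real.sqrt (sqIncrement τ q.1 q.2.1 q.2.2)).sum
          + R ^ (P.length + L'.length) * Real.sqrt (sqIncrement τ q.1 q.2.1 q.2.2) :=
          add_le_add step1 step2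
      _ = R ^ (P.length + L'.length) * Real.sqrt (sqIncrement τ q.1 q.2.1 q.2.2)
          + (L'.map fun q => R ^ (P.length + L'.length) *
              Real.sqrt (sqIncrement τ q.1 q.2.1 q.2.2)).sum := add_comm _ _

lemma tele_fn (hR : 0 ≤ R) (τ : TracialStateC n r R) {ℓ : ℕ} (ls : Fin ℓ → Letter n r)
    (ts ts' : Fin ℓ → ℝ≥0) :
    ‖τ.tr (List.ofFn fun k => (ls k, ts k)) -
        τ.tr (List.ofFn fun k => (ls k, ts' k))‖
      ≤ ∑ m : Fin ℓ, R ^ (ℓ - 1) * Real.sqrt (sqIncrement τ (ls m) (ts m) (ts' m)) := by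
  have h := tele hR τ (List.ofFn fun k => (ls k, ts k, ts' k)) []
  simpa [List.map_ofFn, Function.comp_def, List.sum_ofFn] using h

lemma gamma_mod {δk : ℕ → ℝ} (hR : 0 ≤ R) {τ : TracialStateC n r R} (hτ : τ ∈ GammaSet δk)
    (k : ℕ) {ℓ : ℕ} (ls : Fin ℓ → Letter n r) (ts ts' : Fin ℓ → ℝ≥0)
    (h1 : ∀ m, (ts m : ℝ) ≤ k + 1) (h2 : ∀ m, (ts' m : ℝ) ≤ k + 1)
    (h3 : ∀ m, |(ts m : ℝ) - (ts' m : ℝ)| ≤ δk k) :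
    ‖τ.tr (List.ofFn fun i => (ls i, ts i)) -
        τ.tr (List.ofFn fun i => (ls i, ts' i))‖
      ≤ ℓ * R ^ (ℓ - 1) / (k + 1) := by
  refine (tele_fn hR τ ls ts ts').trans ?_
  have hb : ∀ m : Fin ℓ, R ^ (ℓ - 1) * Real.sqrt (sqIncrement τ (ls m) (ts m) (ts' m))
      ≤ R ^ (ℓ - 1) * (1 / (k + 1)) := fun m =>
    mul_le_mul_of_nonneg_left (hτ k (ts m) (ts' m) (h1 m) (h2 m) (h3 m) (ls m)) (by positivity)
  calc ∑ m : Fin ℓ, R ^ (ℓ - 1) * Real.sqrt (sqIncrement τ (ls m) (ts m) (ts' m))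
      ≤ ∑ _m : Fin ℓ, R ^ (ℓ - 1) * (1 / (k + 1)) := Finset.sum_le_sum (fun m _ => hb m)
    _ = ℓ * R ^ (ℓ - 1) / (k + 1) := by
        rw [Finset.sum_const, Finset.card_univ]
        simp [Fintype.card_fin]
        ring

lemma exists_k (c M ε : ℝ) (hc : 0 ≤ c) (hε : 0 < ε) :
    ∃ k : ℕ, M ≤ k ∧ c / (k + 1) < ε := by
  obtain ⟨k, hk⟩ := exists_nat_gt (max M (c / ε))
  refine ⟨k, le_of_lt (lt_of_le_of_lt (le_max_left _ _) hk), ?_⟩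
  rw [div_lt_iff₀ (by positivity)]
  have h1 : c / ε < k := lt_of_le_of_lt (le_max_right _ _) hk
  have h2 := (div_lt_iff₀ hε).1 h1
  nlinarith

lemma word_ofFn (w : List (Letter n r × ℝ≥0)) :
    w = List.ofFn (fun i : Fin w.length => ((w.get i).1, (w.get i).2)) := by
  conv_lhs => rw [← List.ofFn_get w]

end GammaAux

open GammaAux Filter Topology in

/-- Lemma 2.2(2): for any sequence (δ_k) of positive reals, Γ_{(δ_k)} is a
compact subset of (TS^c(C*_R⟨x(·)⟩), d), here expressed as sequential
compactness with respect to the metric d. -/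
theorem gammaSet_compact (n : ℕ) (r : Fin (n + 1) → ℕ) (R : ℝ) (hR : 0 < R)
    (δk : ℕ → ℝ) (hδk : ∀ k, 0 < δk k)
    (u : ℕ → TracialStateC n r R) (hu : ∀ a, u a ∈ GammaSet δk) :
    ∃ τ ∈ (GammaSet δk : Set (TracialStateC n r R)),
      ∃ φ : ℕ → ℕ, StrictMono φ ∧
        Filter.Tendsto (fun a => trDist (u (φ a)) τ) Filter.atTop (nhds 0) := by
  classical
  have hR0 : (0:ℝ) ≤ R := hR.le
  set e : List (Letter n r × ℚ) → List (Letter n r × ℝ≥0) :=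
    fun w => w.map (fun z => (z.1, Real.toNNReal z.2)) with he
  have hK : IsCompact {f : List (Letter n r × ℚ) → ℂ |
      ∀ w, f w ∈ Metric.closedBall (0:ℂ) (R ^ (e w).length)} := by
    have h := isCompact_univ_pi
      (fun w : List (Letter n r × ℚ) => isCompact_closedBall (0:ℂ) (R ^ (e w).length))
    convert h using 1
    ext f
    simp [Set.mem_univ_pi]
  obtain ⟨g₀, hg₀, φ, hφ, hconv⟩ := hK.tendsto_subseq
      (x := fun a => fun w : List (Letter n r × ℚ) => (u a).tr (e w)) (fun a w => by
        rw [Metric.mem_closedBall, dist_zero_right]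
        exact (u a).norm_bound (e w))
  have hrat : ∀ w : List (Letter n r × ℚ),
      Tendsto (fun a => (u (φ a)).tr (e w)) atTop (𝓝 (g₀ w)) := by
    intro w
    exact (tendsto_pi_nhds.1 hconv w)
  -- Cauchy at every word
  have hcauchy : ∀ (ℓ : ℕ) (ls : Fin ℓ → Letter n r) (ts : Fin ℓ → ℝ≥0),
      CauchySeq (fun a => (u (φ a)).tr (List.ofFn fun i => (ls i, ts i))) := by
    intro ℓ ls ts
    rw [Metric.cauchySeq_iff]
    intro ε hε
    obtain ⟨k, hk1, hk2⟩ := exists_k (ℓ * R ^ (ℓ - 1)) (∑ i, (ts i : ℝ)) (ε / 4)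
      (by positivity) (by linarith)
    have htsk : ∀ i, (ts i : ℝ) ≤ k := by
      intro i
      have h1 : (ts i : ℝ) ≤ ∑ j, (ts j : ℝ) :=
        Finset.single_le_sum (fun j _ => (ts j).coe_nonneg) (Finset.mem_univ i)
      linarith
    set δ : ℝ := min (δk k) 1 with hδdef
    have hδpos : 0 < δ := lt_min (hδk k) one_pos
    have hq : ∀ i : Fin ℓ, ∃ q : ℚ, (ts i : ℝ) < q ∧ (q : ℝ) < (ts i : ℝ) + δ := fun i =>
      exists_rat_btwn (by linarith)
    choose q hq1 hq2 using hq
    set ts' : Fin ℓ → ℝ≥0 := fun i => Real.toNNReal (q i) with hts'def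
    have hts' : ∀ i, (ts' i : ℝ) = (q i : ℝ) := fun i =>
      Real.coe_toNNReal _ (le_of_lt (lt_of_le_of_lt (ts i).coe_nonneg (hq1 i)))
    have htsk1 : ∀ i, (ts i : ℝ) ≤ k + 1 := fun i => by linarith [htsk i]
    have htsk' : ∀ i, (ts' i : ℝ) ≤ k + 1 := fun i => by
      have h1 := hq2 i
      have h2 : δ ≤ 1 := min_le_right _ _
      rw [hts' i]; linarith [htsk i]
    have hdiff : ∀ i, |(ts i : ℝ) - (ts' i : ℝ)| ≤ δk k := fun i => by
      rw [hts' i]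
      have h1 := hq1 i
      have h2 := hq2 i
      have h3 : δ ≤ δk k := min_le_left _ _
      rw [abs_le]
      constructor <;> [linarith; linarith [(hδk k).le]]
    have happrox : ∀ a, ‖(u (φ a)).tr (List.ofFn fun i => (ls i, ts i)) -
        (u (φ a)).tr (List.ofFn fun i => (ls i, ts' i))‖ ≤ ℓ * R ^ (ℓ - 1) / (k + 1) :=
      fun a => gamma_mod hR0 (hu (φ a)) k ls ts ts' htsk1 htsk' hdiff
    have hc := (hrat (List.ofFn fun i => (ls i, q i))).cauchySeq
    have he' : (fun a => (u (φ a)).tr (e (List.ofFn fun i => (ls i, q i))))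
        = fun a => (u (φ a)).tr (List.ofFn fun i => (ls i, ts' i)) := by
      funext a
      congr 1
      rw [he]
      simp only [List.map_ofFn]
      rfl
    rw [he'] at hc
    rw [Metric.cauchySeq_iff] at hc
    obtain ⟨N, hN⟩ := hc (ε / 2) (by linarith)
    refine ⟨N, fun m hm n' hn' => ?_⟩
    have h3 := hN m hm n' hn'
    have e1 : dist ((u (φ m)).tr (List.ofFn fun i => (ls i, ts i)))
        ((u (φ m)).tr (List.ofFn fun i => (ls i, ts' i))) ≤ ℓ * R ^ (ℓ - 1) / (k + 1) := by
      rw [Complex.dist_eq]; exact happrox m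
    have e3 : dist ((u (φ n')).tr (List.ofFn fun i => (ls i, ts' i)))
        ((u (φ n')).tr (List.ofFn fun i => (ls i, ts i))) ≤ ℓ * R ^ (ℓ - 1) / (k + 1) := by
      rw [dist_comm, Complex.dist_eq]; exact happrox n'
    have h4 := dist_triangle4 ((u (φ m)).tr (List.ofFn fun i => (ls i, ts i)))
      ((u (φ m)).tr (List.ofFn fun i => (ls i, ts' i)))
      ((u (φ n')).tr (List.ofFn fun i => (ls i, ts' i)))
      ((u (φ n')).tr (List.ofFn fun i => (ls i, ts i)))
    linarith
  have hcauchyw : ∀ w : List (Letter n r × ℝ≥0), CauchySeq (fun a => (u (φ a)).tr w) := by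
    intro w
    rw [word_ofFn w]
    exact hcauchy w.length (fun i => (w.get i).1) (fun i => (w.get i).2)
  have hlim : ∀ w, ∃ x, Tendsto (fun a => (u (φ a)).tr w) atTop (𝓝 x) :=
    fun w => cauchySeq_tendsto_of_complete (hcauchyw w)
  choose g hg using hlim
  -- limit modulus of continuity
  have hmodg : ∀ (k : ℕ) {ℓ : ℕ} (ls : Fin ℓ → Letter n r) (ts ts' : Fin ℓ → ℝ≥0),
      (∀ m, (ts m : ℝ) ≤ k + 1) → (∀ m, (ts' m : ℝ) ≤ k + 1) →
      (∀ m, |(ts m : ℝ) - (ts' m : ℝ)| ≤ δk k) →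
      ‖g (List.ofFn fun i => (ls i, ts i)) - g (List.ofFn fun i => (ls i, ts' i))‖
        ≤ ℓ * R ^ (ℓ - 1) / (k + 1) := by
    intro k ℓ ls ts ts' h1 h2 h3
    have ht : Tendsto (fun a => ‖(u (φ a)).tr (List.ofFn fun i => (ls i, ts i)) -
        (u (φ a)).tr (List.ofFn fun i => (ls i, ts' i))‖) atTop
        (𝓝 (‖g (List.ofFn fun i => (ls i, ts i)) -
          g (List.ofFn fun i => (ls i, ts' i))‖)) :=
      (continuous_norm.tendsto _).comp ((hg _).sub (hg _))
    exact le_of_tendsto' ht (fun a => gamma_mod hR0 (hu (φ a)) k ls ts ts' h1 h2 h3)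
  -- the limit state
  refine ⟨⟨g, ?_, ?_, ?_, ?_, ?_, ?_, ?_⟩, ?_, φ, hφ, ?_⟩
  · -- normalized
    refine tendsto_nhds_unique (hg []) ?_
    have : (fun a => (u (φ a)).tr []) = fun _ => (1 : ℂ) :=
      funext fun a => (u (φ a)).normalized
    rw [this]
    exact tendsto_const_nhds
  · -- tracial
    intro w v
    refine tendsto_nhds_unique (hg (w ++ v)) ?_
    have : (fun a => (u (φ a)).tr (w ++ v)) = fun a => (u (φ a)).tr (v ++ w) :=
      funext fun a => (u (φ a)).tracial w v
    rw [this]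
    exact hg (v ++ w)
  · -- star_word
    intro w
    refine tendsto_nhds_unique (hg w.reverse) ?_
    have h1 : (fun a => (u (φ a)).tr w.reverse) =
        fun a => starRingEnd ℂ ((u (φ a)).tr w) :=
      funext fun a => (u (φ a)).star_word w
    rw [h1]
    exact (Complex.continuous_conj.tendsto _).comp (hg w)
  · -- positive
    intro k ws c
    have ht : Tendsto (fun a => (∑ i, ∑ j, starRingEnd ℂ (c i) * c j *
        (u (φ a)).tr ((ws i).reverse ++ ws j)).re) atTop
        (𝓝 ((∑ i, ∑ j, starRingEnd ℂ (c i) * c j * g ((ws i).reverse ++ ws j)).re)) := by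
      refine (Complex.continuous_re.tendsto _).comp ?_
      refine tendsto_finset_sum _ (fun i _ => tendsto_finset_sum _ (fun j _ => ?_))
      exact (hg _).const_mul _
    exact ge_of_tendsto' ht (fun a => (u (φ a)).positive k ws c)
  · -- norm_bound
    intro w
    have ht : Tendsto (fun a => ‖(u (φ a)).tr w‖) atTop
        (𝓝 (‖g w‖)) := (continuous_norm.tendsto _).comp (hg w)
    exact le_of_tendsto' ht (fun a => (u (φ a)).norm_bound w)
  · -- generator_bound
    intro k ws c x t
    have ht1 : Tendsto (fun a => (∑ i, ∑ j, starRingEnd ℂ (c i) * c j *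
        (u (φ a)).tr ((ws i).reverse ++ [(x, t), (x, t)] ++ ws j)).re) atTop
        (𝓝 ((∑ i, ∑ j, starRingEnd ℂ (c i) * c j *
          g ((ws i).reverse ++ [(x, t), (x, t)] ++ ws j)).re)) := by
      refine (Complex.continuous_re.tendsto _).comp ?_
      refine tendsto_finset_sum _ (fun i _ => tendsto_finset_sum _ (fun j _ => ?_))
      exact (hg _).const_mul _
    have ht2 : Tendsto (fun a => R ^ 2 * (∑ i, ∑ j, starRingEnd ℂ (c i) * c j *
        (u (φ a)).tr ((ws i).reverse ++ ws j)).re) atTop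
        (𝓝 (R ^ 2 * (∑ i, ∑ j, starRingEnd ℂ (c i) * c j *
          g ((ws i).reverse ++ ws j)).re)) := by
      refine Tendsto.const_mul _ ?_
      refine (Complex.continuous_re.tendsto _).comp ?_
      refine tendsto_finset_sum _ (fun i _ => tendsto_finset_sum _ (fun j _ => ?_))
      exact (hg _).const_mul _
    exact le_of_tendsto_of_tendsto' ht1 ht2 (fun a => (u (φ a)).generator_bound k ws c x t)
  · -- moment_continuous
    intro ℓ ls
    rw [Metric.continuous_iff]
    intro ts ε hε
    obtain ⟨k, hk1, hk2⟩ := exists_k (ℓ * R ^ (ℓ - 1)) (∑ i, (ts i : ℝ)) ε (by positivity) hε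
    have htsk : ∀ i, (ts i : ℝ) ≤ k := fun i => le_trans
      (Finset.single_le_sum (fun j _ => (ts j).coe_nonneg) (Finset.mem_univ i)) hk1
    refine ⟨min (δk k) 1, lt_min (hδk k) one_pos, fun ts2 hts2 => ?_⟩
    have habs : ∀ i, |(ts2 i : ℝ) - (ts i : ℝ)| < min (δk k) 1 := fun i => by
      have h := lt_of_le_of_lt (dist_le_pi_dist ts2 ts i) hts2
      rwa [NNReal.dist_eq] at h
    have h1 : ∀ i, (ts2 i : ℝ) ≤ k + 1 := fun i => by
      have ha := (abs_lt.1 (habs i)).2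
      have hb : min (δk k) 1 ≤ 1 := min_le_right _ _
      linarith [htsk i]
    have h2 : ∀ i, (ts i : ℝ) ≤ k + 1 := fun i => by linarith [htsk i]
    have h3 : ∀ i, |(ts2 i : ℝ) - (ts i : ℝ)| ≤ δk k := fun i =>
      le_trans (le_of_lt (habs i)) (min_le_left _ _)
    rw [Complex.dist_eq]
    exact lt_of_le_of_lt (hmodg k ls ts2 ts h1 h2 h3) hk2
  · -- GammaSet membership
    intro k s t h1 h2 h3 p
    have hc : Tendsto (fun a => ((u (φ a)).tr [(p, s), (p, s)] - (u (φ a)).tr [(p, s), (p, t)]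
        - (u (φ a)).tr [(p, t), (p, s)] + (u (φ a)).tr [(p, t), (p, t)])) atTop
        (𝓝 (g [(p, s), (p, s)] - g [(p, s), (p, t)] - g [(p, t), (p, s)] + g [(p, t), (p, t)])) :=
      (((hg _).sub (hg _)).sub (hg _)).add (hg _)
    have hre := (Complex.continuous_re.tendsto _).comp hc
    have hsqrt := (Real.continuous_sqrt.tendsto _).comp hre
    exact le_of_tendsto' hsqrt (fun a => hu (φ a) k s t h1 h2 h3 p)
  · -- convergence in trDist
    have hgbound : ∀ w, ‖g w‖ ≤ R ^ w.length := by
      intro w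
      have ht : Tendsto (fun a => ‖(u (φ a)).tr w‖) atTop
          (𝓝 (‖g w‖)) := (continuous_norm.tendsto _).comp (hg w)
      exact le_of_tendsto' ht (fun a => (u (φ a)).norm_bound w)
    -- uniform convergence on compact time boxes
    have hunif : ∀ (m ℓ : ℕ) (ε : ℝ), 0 < ε → ∃ N : ℕ, ∀ a ≥ N,
        ∀ (ls : Fin ℓ → Letter n r) (ts : Fin ℓ → ℝ≥0), (∀ i, (ts i : ℝ) ≤ m + 1) →
        ‖(u (φ a)).tr (List.ofFn fun i => (ls i, ts i)) -
          g (List.ofFn fun i => (ls i, ts i))‖ < ε := by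
      intro m ℓ ε hε
      obtain ⟨k, hk1, hk2⟩ := exists_k (ℓ * R ^ (ℓ - 1)) (m + 1) (ε / 4)
        (by positivity) (by linarith)
      obtain ⟨M, hM⟩ := exists_nat_gt (1 / min (δk k) 1)
      have hδpos : 0 < min (δk k) 1 := lt_min (hδk k) one_pos
      have hMpos : (0:ℝ) < (M : ℝ) + 1 := by positivity
      have hmesh : 1 / ((M : ℝ) + 1) < min (δk k) 1 := by
        rw [div_lt_iff₀ hMpos]
        rw [div_lt_iff₀ hδpos] at hM
        nlinarith [hδpos]
      set J : ℕ := (m + 1) * (M + 1) with hJ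
      set γ : Fin (J + 1) → ℝ≥0 := fun j => (j : ℝ≥0) / ((M : ℝ≥0) + 1) with hγ
      have hfin : ∀ᶠ a in atTop, ∀ p : (Fin ℓ → Letter n r) × (Fin ℓ → Fin (J + 1)),
          dist ((u (φ a)).tr (List.ofFn fun i => (p.1 i, γ (p.2 i))))
            (g (List.ofFn fun i => (p.1 i, γ (p.2 i)))) < ε / 4 := by
        rw [eventually_all]
        intro p
        exact (Metric.tendsto_nhds.1 (hg _)) (ε / 4) (by linarith)
      obtain ⟨N, hN⟩ := eventually_atTop.1 hfin
      refine ⟨N, fun a ha ls ts hts => ?_⟩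
      have hfloor : ∀ i, ⌊(ts i : ℝ) * ((M : ℝ) + 1)⌋₊ ≤ J := by
        intro i
        have h1 : (ts i : ℝ) * ((M : ℝ) + 1) ≤ ((m : ℝ) + 1) * ((M : ℝ) + 1) := by
          nlinarith [hts i, (ts i).coe_nonneg]
        have h2 : (((m + 1) * (M + 1) : ℕ) : ℝ) = ((m : ℝ) + 1) * ((M : ℝ) + 1) := by
          push_cast; ring
        calc ⌊(ts i : ℝ) * ((M : ℝ) + 1)⌋₊ ≤ ⌊(((m + 1) * (M + 1) : ℕ) : ℝ)⌋₊ :=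
              Nat.floor_le_floor (by rw [h2]; exact h1)
          _ = J := by rw [Nat.floor_natCast]
      set v : Fin ℓ → Fin (J + 1) := fun i =>
        ⟨⌊(ts i : ℝ) * ((M : ℝ) + 1)⌋₊, Nat.lt_succ_of_le (hfloor i)⟩ with hv
      set ts'' : Fin ℓ → ℝ≥0 := fun i => γ (v i) with hts''
      have hts''co : ∀ i, (ts'' i : ℝ) = (⌊(ts i : ℝ) * ((M : ℝ) + 1)⌋₊ : ℝ) / ((M : ℝ) + 1) := by
        intro i
        rw [hts'']
        simp only [hγ, hv, NNReal.coe_div]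
        push_cast
        norm_num
      have hle : ∀ i, (ts'' i : ℝ) ≤ (ts i : ℝ) := by
        intro i
        rw [hts''co, div_le_iff₀ hMpos]
        exact Nat.floor_le (by positivity)
      have hclose : ∀ i, |(ts i : ℝ) - (ts'' i : ℝ)| ≤ 1 / ((M : ℝ) + 1) := by
        intro i
        rw [abs_of_nonneg (sub_nonneg.2 (hle i)), hts''co]
        have h2 : (ts i : ℝ) * ((M : ℝ) + 1) < (⌊(ts i : ℝ) * ((M : ℝ) + 1)⌋₊ : ℝ) + 1 :=
          Nat.lt_floor_add_one _
        rw [sub_le_iff_le_add]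
        have h3 : 1 / ((M : ℝ) + 1) + (⌊(ts i : ℝ) * ((M : ℝ) + 1)⌋₊ : ℝ) / ((M : ℝ) + 1)
            = ((⌊(ts i : ℝ) * ((M : ℝ) + 1)⌋₊ : ℝ) + 1) / ((M : ℝ) + 1) := by ring
        rw [h3, le_div_iff₀ hMpos]
        linarith
      have c1 : ∀ i, (ts i : ℝ) ≤ (k : ℝ) + 1 := fun i => le_trans (hts i) (by linarith)
      have c2 : ∀ i, (ts'' i : ℝ) ≤ (k : ℝ) + 1 := fun i => le_trans (hle i) (c1 i)
      have c3 : ∀ i, |(ts i : ℝ) - (ts'' i : ℝ)| ≤ δk k := fun i =>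
        le_trans (hclose i) (le_trans (le_of_lt hmesh) (min_le_left _ _))
      have e1 := gamma_mod hR0 (hu (φ a)) k ls ts ts'' c1 c2 c3
      have e3 := hmodg k ls ts ts'' c1 c2 c3
      have e2 := hN a ha (ls, v)
      have hd1 : dist ((u (φ a)).tr (List.ofFn fun i => (ls i, ts i)))
          ((u (φ a)).tr (List.ofFn fun i => (ls i, ts'' i))) ≤ ℓ * R ^ (ℓ - 1) / (k + 1) := by
        rw [Complex.dist_eq]; exact e1
      have hd3 : dist (g (List.ofFn fun i => (ls i, ts'' i)))
          (g (List.ofFn fun i => (ls i, ts i))) ≤ ℓ * R ^ (ℓ - 1) / (k + 1) := by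
        rw [dist_comm, Complex.dist_eq]; exact e3
      have h4 := dist_triangle4 ((u (φ a)).tr (List.ofFn fun i => (ls i, ts i)))
        ((u (φ a)).tr (List.ofFn fun i => (ls i, ts'' i)))
        (g (List.ofFn fun i => (ls i, ts'' i)))
        (g (List.ofFn fun i => (ls i, ts i)))
      rw [← Complex.dist_eq]
      linarith [e2]
    set c : ℕ × ℕ → ℝ := fun q => (1 / 2 ^ (q.1 + 1)) * (1 / (2 * R) ^ (q.2 + 1)) with hcdef
    set S : ℕ × ℕ → ℕ → ℝ := fun q a =>
      ⨆ ls : Fin (q.2 + 1) → Letter n r,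
        ⨆ ts : Fin (q.2 + 1) → (Set.Icc (0 : ℝ≥0) ((q.1 : ℝ≥0) + 1)),
          ‖(u (φ a)).tr (List.ofFn fun i => (ls i, (ts i : ℝ≥0))) -
            g (List.ofFn fun i => (ls i, (ts i : ℝ≥0)))‖ with hSdef
    have hSnn : ∀ q a, 0 ≤ S q a := fun q a =>
      Real.iSup_nonneg fun ls => Real.iSup_nonneg fun ts => norm_nonneg _
    have hSle : ∀ q a, S q a ≤ 2 * R ^ (q.2 + 1) := by
      intro q a
      refine Real.iSup_le (fun ls => Real.iSup_le (fun ts => ?_) (by positivity)) (by positivity)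
      have h1 : ‖(u (φ a)).tr (List.ofFn fun i => (ls i, (ts i : ℝ≥0)))‖
          ≤ R ^ (q.2 + 1) := by
        have h := (u (φ a)).norm_bound (List.ofFn fun i => (ls i, (ts i : ℝ≥0)))
        rwa [List.length_ofFn] at h
      have h2 : ‖g (List.ofFn fun i => (ls i, (ts i : ℝ≥0)))‖ ≤ R ^ (q.2 + 1) := by
        have h := hgbound (List.ofFn fun i => (ls i, (ts i : ℝ≥0)))
        rwa [List.length_ofFn] at h
      have h3 : ‖(u (φ a)).tr (List.ofFn fun i => (ls i, (ts i : ℝ≥0))) -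
          g (List.ofFn fun i => (ls i, (ts i : ℝ≥0)))‖
          ≤ ‖(u (φ a)).tr (List.ofFn fun i => (ls i, (ts i : ℝ≥0)))‖
            + ‖g (List.ofFn fun i => (ls i, (ts i : ℝ≥0)))‖ := by
        simpa [sub_eq_add_neg] using norm_add_le
          ((u (φ a)).tr (List.ofFn fun i => (ls i, (ts i : ℝ≥0))))
          (-(g (List.ofFn fun i => (ls i, (ts i : ℝ≥0)))))
      linarith
    have hSto : ∀ q : ℕ × ℕ, Tendsto (S q) atTop (𝓝 0) := by
      intro q
      rw [Metric.tendsto_atTop]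
      intro ε hε
      obtain ⟨N, hN⟩ := hunif q.1 (q.2 + 1) (ε / 2) (by linarith)
      refine ⟨N, fun a ha => ?_⟩
      rw [Real.dist_0_eq_abs, abs_of_nonneg (hSnn q a)]
      have hle2 : S q a ≤ ε / 2 := by
        refine Real.iSup_le (fun ls => Real.iSup_le (fun ts => ?_) (by linarith)) (by linarith)
        refine le_of_lt (hN a ha ls (fun i => (ts i : ℝ≥0)) (fun i => ?_))
        have h := (ts i).2.2
        have h' : ((ts i : ℝ≥0) : ℝ) ≤ (((q.1 : ℝ≥0) + 1 : ℝ≥0) : ℝ) := NNReal.coe_le_coe.2 h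
        rwa [NNReal.coe_add, NNReal.coe_natCast, NNReal.coe_one] at h'
      linarith
    have hcnn : ∀ q : ℕ × ℕ, 0 ≤ c q := fun q => by positivity
    have hcalc : ∀ q : ℕ × ℕ, c q * (2 * R ^ (q.2 + 1))
        = (1 / 2 : ℝ) ^ (q.1 + 1) * (2 * (1 / 2 : ℝ) ^ (q.2 + 1)) := by
      intro q
      simp only [hcdef]
      have hRpow : (R : ℝ) ^ (q.2 + 1) ≠ 0 := pow_ne_zero _ hR.ne'
      rw [mul_pow]
      field_simp
      rw [div_pow, div_pow, one_pow, one_pow]; field_simp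
    have hgeo : Summable (fun m : ℕ => (1 / 2 : ℝ) ^ m) :=
      summable_geometric_of_lt_one (by norm_num) (by norm_num)
    have h1 : Summable (fun m : ℕ => (1 / 2 : ℝ) ^ (m + 1)) :=
      (summable_nat_add_iff 1).2 hgeo
    have h2 : Summable (fun l : ℕ => 2 * (1 / 2 : ℝ) ^ (l + 1)) := h1.mul_left 2
    have hsum : Summable (fun q : ℕ × ℕ => c q * (2 * R ^ (q.2 + 1))) := by
      refine Summable.congr (h1.mul_of_nonneg h2 (fun m => by positivity)
        (fun l => by positivity)) ?_
      intro q
      exact (hcalc q).symm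
    have hab : ∀ q : ℕ × ℕ, Tendsto (fun a => c q * S q a) atTop (𝓝 0) := by
      intro q
      have h := Filter.Tendsto.const_mul (c q) (hSto q)
      rw [mul_zero] at h
      exact h
    have hbnd : ∀ᶠ a in atTop, ∀ q : ℕ × ℕ, ‖c q * S q a‖ ≤ c q * (2 * R ^ (q.2 + 1)) := by
      refine Eventually.of_forall (fun a q => ?_)
      rw [Real.norm_eq_abs, abs_of_nonneg (mul_nonneg (hcnn q) (hSnn q a))]
      exact mul_le_mul_of_nonneg_left (hSle q a) (hcnn q)
    have htt := tendsto_tsum_of_dominated_convergence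
      (f := fun a (q : ℕ × ℕ) => c q * S q a) (g := fun _ => (0 : ℝ)) hsum hab hbnd
    rw [tsum_zero] at htt
    exact htt
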